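/- Let n ≥ 2 and l ≥ 1, let R be the quotient of ℚ[X_0, …, X_{n−1}] by the ideal generated by X_i^{l+1} for all i, and let φ : R → ℚ[X]/(X^{l+1}) be the ℚ-algebra homomorphism sending the class x_i of each X_i to the class of X. Then (ker φ)^{nl} ≠ 0 and (ker φ)^{nl+1} = 0; that is, nil(ker φ) = nl. -/

import Mathlib

set_option synthInstance.maxHeartbeats 400000

open MvPolynomial Finset

private lemma coeff_zero_of_supported {σ : Type*} {p : MvPolynomial σ ℚ} {s : Set σ}
    (hp : p ∈ MvPolynomial.supported ℚ s) {m : σ →₀ ℕ} {i : σ} (hi : i ∉ s) (hm : m i ≠ 0) :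
    MvPolynomial.coeff m p = 0 := by
  classical
  by_contra h
  exact hi (MvPolynomial.mem_supported.mp hp (Finset.mem_coe.mpr ((MvPolynomial.mem_vars i).mpr
    ⟨m, MvPolynomial.mem_support_iff.mpr h, Finsupp.mem_support_iff.mpr hm⟩)))

private lemma sum_single_apply {σ : Type*} [DecidableEq σ] (e : ℕ → σ) (l k : ℕ)
    (hinj : ∀ i ≤ k, ∀ j ≤ k, e i = e j → i = j) (x : σ) :
    (∑ j ∈ Finset.range (k+1), Finsupp.single (e j) l) x
      = if ∃ i ≤ k, e i = x then l else 0 := by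
  classical
  rw [Finsupp.finset_sum_apply]
  simp only [Finsupp.single_apply]
  split_ifs with h
  · obtain ⟨i0, hi0, hei0⟩ := h
    rw [Finset.sum_eq_single i0]
    · rw [if_pos hei0]
    · intro b hb hne
      have hb' : b ≤ k := Nat.lt_succ_iff.mp (Finset.mem_range.mp hb)
      rw [if_neg]
      intro hbe
      exact hne (hinj b hb' i0 hi0 (hbe.trans hei0.symm))
    · intro hi0'
      exact absurd (Finset.mem_range.mpr (Nat.lt_succ_of_le hi0)) hi0'
  · apply Finset.sum_eq_zero
    intro b hb
    rw [if_neg]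
    intro hbe
    exact h ⟨b, Nat.lt_succ_iff.mp (Finset.mem_range.mp hb), hbe⟩

private lemma sub_pow_monomial {σ : Type*} [DecidableEq σ] (a b : σ) (N : ℕ) :
    (X b - X a : MvPolynomial σ ℚ) ^ N
      = ∑ j ∈ Finset.range (N+1),
          monomial (Finsupp.single b j + Finsupp.single a (N-j))
            ((-1:ℚ)^(j+N) * (N.choose j : ℚ)) := by
  rw [sub_pow]
  refine Finset.sum_congr rfl fun j hj => ?_
  have h1 : ((-1 : MvPolynomial σ ℚ))^(j+N) = C ((-1:ℚ)^(j+N)) := by simp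
  have h2 : ((N.choose j : ℕ) : MvPolynomial σ ℚ) = C ((N.choose j : ℕ) : ℚ) := by simp
  rw [h1, h2, X_pow_eq_monomial, X_pow_eq_monomial, C_mul_monomial, monomial_mul,
    mul_comm _ (C _), C_mul_monomial]
  congr 1
  ring

private lemma key_coeff {σ : Type*} [DecidableEq σ] (e : ℕ → σ) (l : ℕ) :
    ∀ k, 1 ≤ k → (∀ i ≤ k, ∀ j ≤ k, e i = e j → i = j) →
    (MvPolynomial.coeff (∑ j ∈ Finset.range (k+1), Finsupp.single (e j) l)
        ((MvPolynomial.X (e 1) - MvPolynomial.X (e 0)) ^ (2*l) *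
          ∏ j ∈ Finset.Ioc 1 k, (MvPolynomial.X (e j) - MvPolynomial.X (e 0)) ^ l)
      = (-1:ℚ)^l * ((2*l).choose l : ℚ))
    ∧ ((MvPolynomial.X (e 1) - MvPolynomial.X (e 0)) ^ (2*l) *
          ∏ j ∈ Finset.Ioc 1 k, (MvPolynomial.X (e j) - MvPolynomial.X (e 0)) ^ l : MvPolynomial σ ℚ)
        ∈ MvPolynomial.supported ℚ (e '' Set.Iic k) := by
  intro k hk
  induction k, hk using Nat.le_induction with
  | base =>
    intro hinj
    have hab : e 0 ≠ e 1 := fun h => absurd (hinj 0 (by omega) 1 (by omega) h) (by omega)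
    constructor
    · rw [Finset.Ioc_self, Finset.prod_empty, mul_one,
        show (1:ℕ)+1 = 2 from rfl, Finset.sum_range_succ, Finset.sum_range_one,
        sub_pow_monomial (e 0) (e 1) (2*l), coeff_sum]
      rw [Finset.sum_eq_single l]
      · rw [coeff_monomial, if_pos, pow_add, pow_mul]
        · norm_num
        · rw [show 2*l - l = l by omega, add_comm]
      · intro j hj hjl
        rw [coeff_monomial, if_neg]
        intro hEq
        apply hjl
        have := DFunLike.congr_fun hEq (e 1)
        simp [Finsupp.add_apply, Finsupp.single_apply, hab] at this
        omega
      · intro h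
        exact absurd (Finset.mem_range.mpr (by omega)) h
    · rw [Finset.Ioc_self, Finset.prod_empty, mul_one]
      exact pow_mem (sub_mem
        ((MvPolynomial.X_mem_supported (R := ℚ)).mpr (Set.mem_image_of_mem e (Set.mem_Iic.mpr (by omega))))
        ((MvPolynomial.X_mem_supported (R := ℚ)).mpr (Set.mem_image_of_mem e (Set.mem_Iic.mpr (by omega))))) _
  | succ k hk ih =>
    intro hinj
    have hinjk : ∀ i ≤ k, ∀ j ≤ k, e i = e j → i = j := by
      intro i hi j hj h
      exact hinj i (by omega) j (by omega) h
    obtain ⟨ihc, ihs⟩ := ih hinjk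
    have hab : e 0 ≠ e (k+1) := fun h => by
      have := hinj 0 (by omega) (k+1) (le_refl _) h
      omega
    have hbnot : e (k+1) ∉ e '' Set.Iic k := by
      rintro ⟨i, hi, hei⟩
      have hi' : i ≤ k := hi
      have := hinj i (by omega) (k+1) (le_refl _) hei
      omega
    have hprod : ∏ j ∈ Finset.Ioc 1 (k+1), (X (e j) - X (e 0) : MvPolynomial σ ℚ) ^ l
        = (∏ j ∈ Finset.Ioc 1 k, (X (e j) - X (e 0)) ^ l) * (X (e (k+1)) - X (e 0)) ^ l :=
      Finset.prod_Ioc_succ_top hk _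
    have hM : (∑ j ∈ Finset.range (k+1+1), Finsupp.single (e j) l)
        = (∑ j ∈ Finset.range (k+1), Finsupp.single (e j) l) + Finsupp.single (e (k+1)) l :=
      Finset.sum_range_succ _ _
    constructor
    · rw [hprod, ← mul_assoc, sub_pow_monomial (e 0) (e (k+1)) l, Finset.mul_sum, coeff_sum]
      rw [Finset.sum_eq_single l]
      · rw [Nat.sub_self, Finsupp.single_zero, add_zero, coeff_mul_monomial', if_pos, hM,
          add_tsub_cancel_right, Nat.choose_self]
        · rw [ihc]
          have : ((-1:ℚ))^(l+l) = 1 := Even.neg_one_pow ⟨l, rfl⟩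
          rw [this]
          ring
        · -- single (e (k+1)) l ≤ M (k+1)
          rw [hM]
          intro x
          rcases eq_or_ne x (e (k+1)) with rfl | hx
          · simp [Finsupp.single_apply]
          · simp [Finsupp.single_apply, Ne.symm hx]
      · intro j hj hjl
        have hjle : j ≤ l := Nat.lt_succ_iff.mp (Finset.mem_range.mp hj)
        rw [coeff_mul_monomial']
        split_ifs with hle
        · rw [coeff_zero_of_supported ihs hbnot, zero_mul]
          -- ((M(k+1)) - u) (e (k+1)) = l - j ≠ 0
          rw [Finsupp.tsub_apply, Finsupp.add_apply, Finsupp.single_apply, if_pos rfl,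
            Finsupp.single_apply, if_neg hab,
            sum_single_apply e l (k+1) hinj, if_pos ⟨k+1, le_refl _, rfl⟩]
          omega
        · rfl
      · intro h
        exact absurd (Finset.mem_range.mpr (by omega)) h
    · rw [hprod, ← mul_assoc]
      apply mul_mem
      · exact MvPolynomial.supported_mono (Set.image_mono (Set.Iic_subset_Iic.mpr (by omega))) ihs
      · exact pow_mem (sub_mem
          ((MvPolynomial.X_mem_supported (R := ℚ)).mpr (Set.mem_image_of_mem e (Set.mem_Iic.mpr (by omega))))
          ((MvPolynomial.X_mem_supported (R := ℚ)).mpr (Set.mem_image_of_mem e (Set.mem_Iic.mpr (by omega))))) _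

private lemma span_X_pow_le (n l : ℕ) (I : Ideal (MvPolynomial (Fin n) ℚ))
    (hI : I = Ideal.span (Set.range fun i : Fin n => MvPolynomial.X i ^ (l + 1))) :
    (Ideal.span (Set.range (X : Fin n → MvPolynomial (Fin n) ℚ))) ^ (n*l+1) ≤ I := by
  classical
  rw [Ideal.span, Submodule.span_pow, Submodule.span_le]
  rintro a ha
  rw [Set.mem_pow] at ha
  obtain ⟨fseq, hfa⟩ := ha
  choose g hg using fun i => (fseq i).2
  rw [List.prod_ofFn] at hfa
  have hprod : a = ∏ i : Fin (n*l+1), X (g i) := by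
    rw [← hfa]
    exact (Finset.prod_congr rfl fun i _ => (hg i)).symm
  have hcard : (Finset.univ : Finset (Fin n)).card * l < (Finset.univ : Finset (Fin (n*l+1))).card := by
    simp only [Finset.card_univ, Fintype.card_fin]
    omega
  obtain ⟨y, -, hy⟩ := Finset.exists_lt_card_fiber_of_mul_lt_card_of_maps_to
    (fun a _ => Finset.mem_univ (g a)) hcard
  have hsplit : (∏ i ∈ Finset.univ.filter (fun i => g i = y), X (g i)) *
      (∏ i ∈ Finset.univ.filter (fun i => ¬ g i = y), X (g i)) = a := by
    rw [hprod]
    exact Finset.prod_filter_mul_prod_filter_not _ _ _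
  have hconst : (∏ i ∈ Finset.univ.filter (fun i => g i = y), X (g i))
      = (X y : MvPolynomial (Fin n) ℚ) ^ (Finset.univ.filter (fun i => g i = y)).card := by
    rw [← Finset.prod_const]
    exact Finset.prod_congr rfl fun i hi => by rw [(Finset.mem_filter.mp hi).2]
  set c := (Finset.univ.filter (fun i => g i = y)).card with hc
  have hcl : l + 1 ≤ c := hy
  have hXc : (X y : MvPolynomial (Fin n) ℚ) ^ c = X y ^ (l+1) * X y ^ (c - (l+1)) := by
    rw [← pow_add]
    congr 1
    omega
  rw [hI]
  rw [← hsplit, hconst, hXc, mul_assoc]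
  exact Ideal.mul_mem_right _ _ (Ideal.subset_span ⟨y, rfl⟩)

/-- Let `R = ℚ[X_0, …, X_{n−1}] / (X_i^{l+1})` and let `φ : R → ℚ[X]/(X^{l+1})` be
the `ℚ`-algebra homomorphism sending each class `x_i` to the class of `X`. Then
`(ker φ)^{nl} ≠ 0` and `(ker φ)^{nl+1} = 0`, i.e. `nil(ker φ) = nl`. -/
theorem nil_ker_mul_complex_projective (n l : ℕ) (hn : 2 ≤ n) (hl : 1 ≤ l)
    (I : Ideal (MvPolynomial (Fin n) ℚ))
    (hI : I = Ideal.span (Set.range fun i : Fin n => MvPolynomial.X i ^ (l + 1)))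
    (J : Ideal (Polynomial ℚ))
    (hJ : J = Ideal.span {Polynomial.X ^ (l + 1)})
    (φ : (MvPolynomial (Fin n) ℚ ⧸ I) →ₐ[ℚ] (Polynomial ℚ ⧸ J))
    (hφ : ∀ i : Fin n,
      φ (Ideal.Quotient.mk I (MvPolynomial.X i)) = Ideal.Quotient.mk J Polynomial.X) :
    (RingHom.ker φ) ^ (n * l) ≠ ⊥ ∧ (RingHom.ker φ) ^ (n * l + 1) = ⊥ := by
  classical
  set K := RingHom.ker φ with hK
  -- ### Upper bound
  have hKM : K ≤ Ideal.map (Ideal.Quotient.mk I) (Ideal.span (Set.range X)) := by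
    intro r hr
    obtain ⟨g, rfl⟩ := Ideal.Quotient.mk_surjective r
    have hχ0 : ∀ a ∈ J, (Polynomial.aeval (0:ℚ)) a = 0 := by
      intro a ha
      rw [hJ, Ideal.mem_span_singleton] at ha
      obtain ⟨b, rfl⟩ := ha
      simp
    set χ : (Polynomial ℚ ⧸ J) →ₐ[ℚ] ℚ := Ideal.Quotient.liftₐ J (Polynomial.aeval 0) hχ0 with hχ
    have hcomp : (χ.comp (φ.comp (Ideal.Quotient.mkₐ ℚ I))) = MvPolynomial.aeval 0 := by
      apply MvPolynomial.algHom_ext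
      intro i
      simp only [AlgHom.comp_apply, Ideal.Quotient.mkₐ_eq_mk, hφ i, aeval_X]
      show χ (Ideal.Quotient.mk J Polynomial.X) = 0
      rw [hχ]
      simp [Ideal.Quotient.liftₐ_apply]
    have hg0 : constantCoeff g = 0 := by
      have h1 : MvPolynomial.aeval (0 : Fin n → ℚ) g
          = χ (φ (Ideal.Quotient.mk I g)) := by rw [← hcomp]; rfl
      rw [aeval_zero] at h1
      have hr0 : φ (Ideal.Quotient.mk I g) = 0 := hr
      rw [hr0, map_zero] at h1
      simpa using h1
    apply Ideal.mem_map_of_mem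
    rw [← Set.image_univ, mem_ideal_span_X_image]
    intro m hm
    have hm0 : m ≠ 0 := by
      rintro rfl
      rw [mem_support_iff] at hm
      exact hm hg0
    obtain ⟨i, hi⟩ := Finsupp.ne_iff.mp hm0
    exact ⟨i, Set.mem_univ i, by simpa using hi⟩
  have hupper : K ^ (n*l+1) = ⊥ := by
    apply le_bot_iff.mp
    calc K^(n*l+1) ≤ (Ideal.map (Ideal.Quotient.mk I) (Ideal.span (Set.range X)))^(n*l+1) :=
          Ideal.pow_right_mono hKM _
      _ = Ideal.map (Ideal.Quotient.mk I) ((Ideal.span (Set.range X))^(n*l+1)) :=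
          (Ideal.map_pow _ _ _).symm
      _ ≤ Ideal.map (Ideal.Quotient.mk I) I := Ideal.map_mono (span_X_pow_le n l I hI)
      _ = ⊥ := Ideal.map_quotient_self I
  -- ### Lower bound
  obtain ⟨m', rfl⟩ : ∃ m', n = m' + 2 := ⟨n - 2, by omega⟩
  set e : ℕ → Fin (m'+2) := fun j => ⟨min j (m'+1), by omega⟩ with he
  have hinj : ∀ i ≤ m'+1, ∀ j ≤ m'+1, e i = e j → i = j := by
    intro i hi j hj h
    have := congrArg Fin.val h
    simp only [he] at this
    omega
  obtain ⟨hc, -⟩ := key_coeff e l (m'+1) (by omega) hinj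
  set m0 : Fin (m'+2) →₀ ℕ := ∑ j ∈ Finset.range ((m'+1)+1), Finsupp.single (e j) l with hm0
  set P : MvPolynomial (Fin (m'+2)) ℚ :=
    (X (e 1) - X (e 0)) ^ (2*l) * ∏ j ∈ Finset.Ioc 1 (m'+1), (X (e j) - X (e 0)) ^ l with hP
  have hcoeffP : coeff m0 P ≠ 0 := by
    rw [hc]
    exact mul_ne_zero (pow_ne_zero _ (by norm_num))
      (Nat.cast_ne_zero.mpr (Nat.choose_pos (by omega)).ne')
  have hPI : P ∉ I := by
    rw [hI]
    have hgen : (Set.range fun i : Fin (m'+2) => (X i : MvPolynomial (Fin (m'+2)) ℚ) ^ (l+1))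
        = (fun s => monomial s (1:ℚ)) '' (Set.range fun i : Fin (m'+2) => Finsupp.single i (l+1)) := by
      rw [← Set.range_comp]
      exact congrArg Set.range (funext fun i => X_pow_eq_monomial)
    rw [hgen, mem_ideal_span_monomial_image]
    intro h
    obtain ⟨si, ⟨i, rfl⟩, hle⟩ := h m0 (mem_support_iff.mpr hcoeffP)
    have h1 : Finsupp.single i (l+1) i ≤ m0 i := hle i
    rw [Finsupp.single_apply, if_pos rfl] at h1
    have h2 : m0 i ≤ l := by
      rw [hm0, sum_single_apply e l (m'+1) hinj i]
      split_ifs <;> omega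
    omega
  have hw : ∀ j : ℕ, (Ideal.Quotient.mk I (X (e j) - X (e 0))) ∈ K := by
    intro j
    have : φ (Ideal.Quotient.mk I (X (e j) - X (e 0))) = 0 := by
      rw [map_sub, map_sub, hφ, hφ, sub_self]
    exact this
  have hPK : (Ideal.Quotient.mk I) P ∈ K ^ ((m'+2)*l) := by
    have hmapP : (Ideal.Quotient.mk I) P
        = ((Ideal.Quotient.mk I) (X (e 1) - X (e 0)))^(2*l) *
          ∏ j ∈ Finset.Ioc 1 (m'+1), ((Ideal.Quotient.mk I) (X (e j) - X (e 0)))^l := by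
      rw [hP, map_mul, map_pow, map_prod]
      simp only [map_pow]
    have h1 : ((Ideal.Quotient.mk I) (X (e 1) - X (e 0)))^(2*l) ∈ K^(2*l) :=
      Ideal.pow_mem_pow (hw 1) _
    have h2 : (∏ j ∈ Finset.Ioc 1 (m'+1), ((Ideal.Quotient.mk I) (X (e j) - X (e 0)))^l)
        ∈ K^(m'*l) := by
      have h3 := Ideal.prod_mem_prod (s := Finset.Ioc 1 (m'+1)) (I := fun _ => K^l)
        (x := fun j => ((Ideal.Quotient.mk I) (X (e j) - X (e 0)))^l)
        (fun j _ => Ideal.pow_mem_pow (hw j) l)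
      rw [Finset.prod_const, Nat.card_Ioc, ← pow_mul] at h3
      have harith : l * (m'+1-1) = m' * l := by
        rw [Nat.add_sub_cancel, mul_comm]
      rwa [harith] at h3
    have h4 := Ideal.mul_mem_mul h1 h2
    replace h4 : ((Ideal.Quotient.mk I) (X (e 1) - X (e 0)))^(2*l) *
        (∏ j ∈ Finset.Ioc 1 (m'+1), ((Ideal.Quotient.mk I) (X (e j) - X (e 0)))^l)
        ∈ K ^ (2*l + m'*l) := (pow_add K (2*l) (m'*l)).ge h4
    have harith2 : 2*l + m'*l = (m'+2)*l := by ring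
    rwa [harith2, ← hmapP] at h4
  refine ⟨fun hbot => ?_, hupper⟩
  rw [hbot] at hPK
  rw [Submodule.mem_bot] at hPK
  exact hPI ((Ideal.Quotient.eq_zero_iff_mem).mp hPK)
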